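/- Let T = (V,E) and T' = (V,E') be two spanning trees on the same finite vertex set V. Then there exists a bijection τ : E → E' such that for every edge e = {i,j} ∈ E, the edge τ(e) = {h,l} ∈ E' satisfies e ∈ path_T(h,l), i.e., e lies on the unique path in T between the endpoints of τ(e). -/

import Mathlib

open SimpleGraph Finset

section Aux

variable {V : Type*}

private lemma acyclic_mono' {G H : SimpleGraph V} (hle : H ≤ G) (hG : G.IsAcyclic) :
    H.IsAcyclic :=
  fun _ c hc => hG (c.mapLe hle) (hc.mapLe hle)

private lemma reach_of_delete_aux {G : SimpleGraph V} {a b x z : V} (w : G.Walk x z) :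
    (G.deleteEdges {s(a,b)}).Reachable x z ∨
    ((G.deleteEdges {s(a,b)}).Reachable x a ∧ (G.deleteEdges {s(a,b)}).Reachable b z) ∨
    ((G.deleteEdges {s(a,b)}).Reachable x b ∧ (G.deleteEdges {s(a,b)}).Reachable a z) := by
  induction w with
  | nil => exact Or.inl (Reachable.refl _)
  | @cons x y _ adj p ih =>
    by_cases hxy : s(x, y) = s(a, b)
    · rcases Sym2.eq_iff.mp hxy with ⟨rfl, rfl⟩ | ⟨rfl, rfl⟩
      · rcases ih with h' | ⟨h1, h2⟩ | ⟨h1, h2⟩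
        · exact Or.inr (Or.inl ⟨Reachable.refl _, h'⟩)
        · exact Or.inl (h1.symm.trans h2)
        · exact Or.inl h2
      · rcases ih with h' | ⟨h1, h2⟩ | ⟨h1, h2⟩
        · exact Or.inr (Or.inr ⟨Reachable.refl _, h'⟩)
        · exact Or.inl h2
        · exact Or.inl (h1.symm.trans h2)
    · have hadj : (G.deleteEdges {s(a,b)}).Adj x y :=
        deleteEdges_adj.mpr ⟨adj, by simpa using hxy⟩
      rcases ih with h' | ⟨h1, h2⟩ | ⟨h1, h2⟩
      · exact Or.inl (hadj.reachable.trans h')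
      · exact Or.inr (Or.inl ⟨hadj.reachable.trans h1, h2⟩)
      · exact Or.inr (Or.inr ⟨hadj.reachable.trans h1, h2⟩)

private lemma reach_of_delete {G : SimpleGraph V} {a b x : V}
    (h : G.Reachable x a) :
    (G.deleteEdges {s(a,b)}).Reachable x a ∨ (G.deleteEdges {s(a,b)}).Reachable x b := by
  obtain ⟨w⟩ := h
  rcases reach_of_delete_aux (a := a) (b := b) w with h' | ⟨h1, _⟩ | ⟨h1, h2⟩
  · exact Or.inl h'
  · exact Or.inl h1
  · exact Or.inr h1

private lemma reach_delete_of_not_reach [DecidableEq V] {G : SimpleGraph V} {a b x y : V}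
    (hxy : G.Reachable x y) (hxa : ¬ G.Reachable x a) :
    (G.deleteEdges {s(a,b)}).Reachable x y := by
  obtain ⟨w⟩ := hxy
  refine ⟨w.toDeleteEdges _ fun e he hmem => hxa ?_⟩
  rw [Set.mem_singleton_iff] at hmem
  subst hmem
  have ha : a ∈ w.support := w.fst_mem_support_of_mem_edges he
  exact ⟨w.takeUntil a ha⟩

private lemma unique_path_mem {T : SimpleGraph V} (hT : T.IsTree) {h l : V} {p : T.Walk h l}
    (hp : p.IsPath) {ε : Sym2 V} (hε : ε ∈ p.edges) :
    ∀ h' l', (s(h', l') : Sym2 V) = s(h, l) → ∀ q : T.Walk h' l', q.IsPath → ε ∈ q.edges := by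
  intro h' l' hs q hq
  rcases Sym2.eq_iff.mp hs with ⟨rfl, rfl⟩ | ⟨rfl, rfl⟩
  · have hpq : (⟨p, hp⟩ : T.Path h' l') = ⟨q, hq⟩ := hT.IsAcyclic.path_unique _ _
    have hpq' : p = q := congrArg Subtype.val hpq
    exact hpq' ▸ hε
  · have hpq : (⟨p, hp⟩ : T.Path l' h') = ⟨q.reverse, hq.reverse⟩ := hT.IsAcyclic.path_unique _ _
    have hpq' : p = q.reverse := congrArg Subtype.val hpq
    have : ε ∈ q.reverse.edges := hpq' ▸ hε
    rw [Walk.edges_reverse, List.mem_reverse] at this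
    exact this

end Aux

section Count

variable {V : Type*} [Fintype V] [DecidableEq V]

private lemma card_cc_delete {G : SimpleGraph V} (hG : G.IsAcyclic) {a b : V} (hab : G.Adj a b) :
    Nat.card (G.deleteEdges {s(a,b)}).ConnectedComponent
      = Nat.card G.ConnectedComponent + 1 := by
  classical
  set G' := G.deleteEdges {s(a,b)} with hG'
  have hle : G' ≤ G := G.deleteEdges_le _
  have hnr : ¬ G'.Reachable a b := by
    have hb := (isAcyclic_iff_forall_adj_isBridge.mp hG) hab
    rw [isBridge_iff] at hb
    exact hb
  haveI : Fintype G'.ConnectedComponent := Fintype.ofFinite _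
  haveI : Fintype G.ConnectedComponent := Fintype.ofFinite _
  let g : G'.ConnectedComponent → G.ConnectedComponent :=
    ConnectedComponent.map (Hom.ofLE hle)
  have hg : ∀ x : V, g (G'.connectedComponentMk x) = G.connectedComponentMk x := fun _ => rfl
  have hfib : ∀ c : G.ConnectedComponent,
      (univ.filter fun d => g d = c).card
        = if c = G.connectedComponentMk a then 2 else 1 := by
    refine ConnectedComponent.ind fun y => ?_
    by_cases hy : G.connectedComponentMk y = G.connectedComponentMk a
    · rw [hy, if_pos rfl]
      have hset : (univ.filter fun d => g d = G.connectedComponentMk a)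
          = {G'.connectedComponentMk a, G'.connectedComponentMk b} := by
        ext d
        simp only [mem_filter, mem_univ, true_and, mem_insert, mem_singleton]
        constructor
        · refine ConnectedComponent.ind (fun x => ?_) d
          intro hd
          rw [hg] at hd
          have hr : G.Reachable x a := ConnectedComponent.exact hd
          rcases reach_of_delete (b := b) hr with h' | h'
          · exact Or.inl (ConnectedComponent.sound h')
          · exact Or.inr (ConnectedComponent.sound h')
        · rintro (rfl | rfl)
          · exact hg a
          · rw [hg]; exact ConnectedComponent.sound hab.reachable.symm
      rw [hset]
      rw [Finset.card_insert_of_notMem, Finset.card_singleton]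
      simp only [mem_singleton]
      intro hc
      exact hnr (ConnectedComponent.exact hc)
    · rw [if_neg hy]
      rw [Finset.card_eq_one]
      refine ⟨G'.connectedComponentMk y, ?_⟩
      ext d
      simp only [mem_filter, mem_univ, true_and, mem_singleton]
      constructor
      · refine ConnectedComponent.ind (fun x => ?_) d
        intro hd
        rw [hg] at hd
        have hr : G.Reachable x y := ConnectedComponent.exact hd
        have hxa : ¬ G.Reachable x a := by
          intro hxa
          exact hy (ConnectedComponent.sound (hr.symm.trans hxa))
        exact ConnectedComponent.sound (reach_delete_of_not_reach hr hxa)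
      · rintro rfl
        exact hg y
  rw [Nat.card_eq_fintype_card, Nat.card_eq_fintype_card]
  have hcount := Finset.card_eq_sum_card_fiberwise
    (f := g) (s := univ) (t := univ) (fun x _ => mem_univ _)
  rw [← Finset.card_univ, hcount, Finset.sum_congr rfl (fun c _ => hfib c)]
  have : ∀ c : G.ConnectedComponent,
      (if c = G.connectedComponentMk a then 2 else 1)
        = 1 + (if c = G.connectedComponentMk a then 1 else 0) := by
    intro c; split <;> rfl
  rw [Finset.sum_congr rfl (fun c _ => this c), Finset.sum_add_distrib]
  simp [Finset.card_univ]

private lemma forest_count : ∀ (n : ℕ) (G : SimpleGraph V), G.IsAcyclic → G.edgeSet.ncard = n →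
    Nat.card G.ConnectedComponent + n = Fintype.card V := by
  intro n
  induction n with
  | zero =>
    intro G _ hcard
    rw [Set.ncard_eq_zero (Set.toFinite _)] at hcard
    rw [edgeSet_eq_empty] at hcard
    subst hcard
    have : Function.Bijective ((⊥ : SimpleGraph V).connectedComponentMk) := by
      constructor
      · intro x y hxy
        exact (reachable_bot).mp (ConnectedComponent.exact hxy)
      · exact Quot.mk_surjective
    rw [← Nat.card_eq_of_bijective _ this, Nat.card_eq_fintype_card, add_zero]
  | succ n ih =>
    intro G hG hcard
    have hne : G.edgeSet.Nonempty := by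
      rw [Set.nonempty_iff_ne_empty]
      intro h
      rw [h, Set.ncard_empty] at hcard
      omega
    obtain ⟨e, he⟩ := hne
    obtain ⟨⟨a, b⟩, rfl⟩ := e.exists_rep
    have hadj : G.Adj a b := he
    have h3 : (G.deleteEdges {s(a,b)}).edgeSet.ncard = n := by
      rw [G.edgeSet_deleteEdges, Set.ncard_diff_singleton_of_mem he, hcard]
      omega
    have := ih (G.deleteEdges {s(a,b)}) (acyclic_mono' (G.deleteEdges_le _) hG) h3
    have hcc := card_cc_delete hG hadj
    omega

end Count

theorem stmt9 {V : Type*} [Fintype V] [DecidableEq V]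
    (T T' : SimpleGraph V) (hT : T.IsTree) (hT' : T'.IsTree) :
    ∃ τ : T.edgeSet ≃ T'.edgeSet,
      ∀ (e : T.edgeSet) (h l : V), (τ e : Sym2 V) = s(h, l) →
        ∀ p : T.Walk h l, p.IsPath → (e : Sym2 V) ∈ p.edges := by
  classical
  haveI : Fintype T.edgeSet := Fintype.ofFinite _
  haveI : Fintype T'.edgeSet := Fintype.ofFinite _
  set t : T.edgeSet → Finset T'.edgeSet := fun e =>
    univ.filter (fun e' : T'.edgeSet => ∀ h l : V, (e' : Sym2 V) = s(h,l) →
      ∀ p : T.Walk h l, p.IsPath → (e : Sym2 V) ∈ p.edges) with ht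
  have hall : ∀ s : Finset T.edgeSet, s.card ≤ (s.biUnion t).card := by
    intro s
    set S : Set (Sym2 V) := ↑(s.image (Subtype.val : T.edgeSet → Sym2 V)) with hS
    have hSsub : S ⊆ T.edgeSet := by
      rintro x hx
      simp only [hS, coe_image, Set.mem_image, mem_coe] at hx
      obtain ⟨e, _, rfl⟩ := hx
      exact e.2
    have hScard : S.ncard = s.card := by
      rw [hS, Set.ncard_coe_finset, Finset.card_image_of_injective _ Subtype.val_injective]
    set G := T.deleteEdges S with hG
    have hGle : G ≤ T := T.deleteEdges_le S
    have hGac : G.IsAcyclic := acyclic_mono' hGle hT.IsAcyclic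
    have hGedge : G.edgeSet = T.edgeSet \ S := T.edgeSet_deleteEdges S
    set H : SimpleGraph V :=
      { Adj := fun x y => T'.Adj x y ∧ G.Reachable x y,
        symm := ⟨fun x y h => ⟨h.1.symm, h.2.symm⟩⟩,
        loopless := ⟨fun x h => T'.loopless.irrefl x h.1⟩ } with hH
    have hHle : H ≤ T' := fun x y h => h.1
    have hHac : H.IsAcyclic := acyclic_mono' hHle hT'.IsAcyclic
    have hwalkreach : ∀ (x y : V) (w : H.Walk x y), G.Reachable x y := by
      intro x y w
      induction w with
      | nil => exact Reachable.refl _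
      | cons adj p ih => exact adj.2.trans ih
    let ψ : H.ConnectedComponent → G.ConnectedComponent :=
      ConnectedComponent.lift G.connectedComponentMk
        (fun v w p _ => ConnectedComponent.sound (hwalkreach v w p))
    have hψ : Function.Surjective ψ := by
      intro c
      obtain ⟨x, rfl⟩ := c.exists_rep
      exact ⟨H.connectedComponentMk x, rfl⟩
    have hccle : Nat.card G.ConnectedComponent ≤ Nat.card H.ConnectedComponent :=
      Nat.card_le_card_of_surjective ψ hψ
    have hA := forest_count _ G hGac rfl
    have hB := forest_count _ H hHac rfl
    -- membership characterization
    have hmem : ∀ e' : T'.edgeSet, e' ∈ s.biUnion t ↔ ¬ ((e' : Sym2 V) ∈ H.edgeSet) := by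
      intro e'
      obtain ⟨⟨h, l⟩, hrep⟩ := Quot.exists_rep (e' : Sym2 V)
      have hval : (e' : Sym2 V) = s(h, l) := hrep.symm
      have hadj' : T'.Adj h l := by rw [← mem_edgeSet, ← hval]; exact e'.2
      have hHmem : ((e' : Sym2 V) ∈ H.edgeSet) ↔ G.Reachable h l := by
        rw [hval, mem_edgeSet]
        exact ⟨fun hh => hh.2, fun hr => ⟨hadj', hr⟩⟩
      rw [hHmem]
      constructor
      · intro hb hreach
        rw [mem_biUnion] at hb
        obtain ⟨e, hes, het⟩ := hb
        rw [ht, mem_filter] at het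
        obtain ⟨q⟩ := hreach
        have hqT : ∀ ε ∈ (q.toPath : G.Walk h l).edges, ε ∈ T.edgeSet := fun ε hε =>
          hGedge ▸ ((q.toPath : G.Walk h l).edges_subset_edgeSet hε) |>.1
        have hp0 : ((q.toPath : G.Walk h l).transfer T hqT).IsPath :=
          (q.toPath).2.transfer hqT
        have hmem0 := het.2 h l hval _ hp0
        rw [Walk.edges_transfer] at hmem0
        have hin : (e : Sym2 V) ∈ G.edgeSet :=
          (q.toPath : G.Walk h l).edges_subset_edgeSet hmem0
        rw [hGedge] at hin
        apply hin.2
        rw [hS]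
        simp only [coe_image, Set.mem_image, mem_coe]
        exact ⟨e, hes, rfl⟩
      · intro hnreach
        obtain ⟨p⟩ := hT.isConnected.preconnected h l
        have hmeet : ∃ ε ∈ (p.toPath : T.Walk h l).edges, ε ∈ S := by
          by_contra hc
          push_neg at hc
          exact hnreach ⟨(p.toPath : T.Walk h l).toDeleteEdges S hc⟩
        obtain ⟨ε, hεp, hεS⟩ := hmeet
        rw [hS] at hεS
        simp only [coe_image, Set.mem_image, mem_coe] at hεS
        obtain ⟨e, hes, hee⟩ := hεS
        rw [mem_biUnion]
        refine ⟨e, hes, ?_⟩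
        rw [ht, mem_filter]
        refine ⟨mem_univ _, ?_⟩
        intro h1 l1 heq q hq
        exact unique_path_mem hT (p.toPath).2 (hee ▸ hεp) h1 l1
          (by rw [← heq, hval]) q hq
    -- edge count of H
    have hHset : H.edgeSet = Subtype.val '' ((↑(univ \ s.biUnion t)) : Set T'.edgeSet) := by
      ext x
      constructor
      · intro hx
        have hxT' : x ∈ T'.edgeSet := edgeSet_mono hHle hx
        refine ⟨⟨x, hxT'⟩, ?_, rfl⟩
        simp only [coe_sdiff, coe_univ, Set.mem_diff, Set.mem_univ, true_and, mem_coe]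
        intro hb
        exact ((hmem _).mp hb) hx
      · rintro ⟨e', he', rfl⟩
        simp only [coe_sdiff, coe_univ, Set.mem_diff, Set.mem_univ, true_and, mem_coe] at he'
        by_contra hx
        exact he' ((hmem e').mpr hx)
    have hHcard : H.edgeSet.ncard = (univ \ s.biUnion t).card := by
      rw [hHset, Set.ncard_image_of_injective _ Subtype.val_injective, Set.ncard_coe_finset]
    have hsdiff : (univ \ s.biUnion t).card = Fintype.card T'.edgeSet - (s.biUnion t).card := by
      rw [Finset.card_sdiff_of_subset (subset_univ _), Finset.card_univ]
    have hble : (s.biUnion t).card ≤ Fintype.card T'.edgeSet := by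
      rw [← Finset.card_univ]; exact Finset.card_le_card (subset_univ _)
    -- edge count of G
    have hGcard : G.edgeSet.ncard = T.edgeSet.ncard - s.card := by
      rw [hGedge, Set.ncard_diff hSsub (Set.toFinite _), hScard]
    have hsle : s.card ≤ T.edgeSet.ncard := by
      rw [← hScard]; exact Set.ncard_le_ncard hSsub (Set.toFinite _)
    -- tree edge counts
    have hTE : T.edgeSet.ncard + 1 = Fintype.card V := by
      rw [Set.ncard_eq_toFinset_card', Set.toFinset_card]
      rw [← edgeFinset_card]
      exact hT.card_edgeFinset
    have hTE' : T'.edgeSet.ncard + 1 = Fintype.card V := by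
      rw [Set.ncard_eq_toFinset_card', Set.toFinset_card]
      rw [← edgeFinset_card]
      exact hT'.card_edgeFinset
    have hTE'2 : T'.edgeSet.ncard = Fintype.card T'.edgeSet := by
      rw [Set.ncard_eq_toFinset_card', Set.toFinset_card]
    omega
  obtain ⟨f, finj, hf⟩ := (Finset.all_card_le_biUnion_card_iff_exists_injective t).mp hall
  have hcards : Fintype.card T.edgeSet = Fintype.card T'.edgeSet := by
    have h1 := hT.card_edgeFinset
    have h2 := hT'.card_edgeFinset
    rw [edgeFinset_card] at h1 h2
    omega
  have hbij : Function.Bijective f :=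
    (Fintype.bijective_iff_injective_and_card f).mpr ⟨finj, hcards⟩
  refine ⟨Equiv.ofBijective f hbij, ?_⟩
  intro e h l heq p hp
  have hfe := hf e
  rw [ht, mem_filter] at hfe
  exact hfe.2 h l heq p hp
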